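/- Suppose a functional Φ on bounded nonnegative random variables has the form Φ(X̃) = a·E(X̃) + b·ess inf(X̃) + c·ess sup(X̃) with a, b, c ≥ 0, a + b + c = 1, and Φ is multiplicative on independent uniform random variables: for all 0 ≤ x₁ ≤ x₂ and 0 ≤ z₁ ≤ z₂ and independent X̃ ~ Unif([x₁,x₂]), Z̃ ~ Unif([z₁,z₂]), Φ(X̃Z̃) = Φ(X̃)Φ(Z̃). Then Φ is the expectation (a=1), the essential infimum (b=1), or the essential supremum (c=1). -/

import Mathlib

open MeasureTheory ProbabilityTheory

/-- A bounded random variable. -/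
def Bdd {Ω : Type*} (X : Ω → ℝ) : Prop := ∃ M : ℝ, ∀ ω, |X ω| ≤ M

/-- The uniform distribution on `[a, b]` (Dirac mass if `a = b`). -/
noncomputable def unif (a b : ℝ) : Measure ℝ :=
  if a = b then Measure.dirac a else ProbabilityTheory.cond volume (Set.Icc a b)

lemma unif01 : unif 0 1 = volume.restrict (Set.Icc 0 1) := by
  rw [unif, if_neg (by norm_num : (0:ℝ) ≠ 1)]
  unfold ProbabilityTheory.cond
  rw [Real.volume_Icc]
  norm_num

section Aux
variable {Ω : Type*} [MeasureSpace Ω] [IsProbabilityMeasure (volume : Measure Ω)]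

omit [IsProbabilityMeasure (volume : Measure Ω)] in
lemma tail_pos {X : Ω → ℝ} (hX : Measurable X) (hmap : Measure.map X volume = unif 0 1)
    {t : ℝ} (ht : t < 1) : volume (X ⁻¹' Set.Ioi t) ≠ 0 := by
  have h : volume (X ⁻¹' Set.Ioi t) = Measure.map X volume (Set.Ioi t) := by
    rw [Measure.map_apply hX measurableSet_Ioi]
  rw [h, hmap, unif01, Measure.restrict_apply measurableSet_Ioi]
  intro h0
  have hsub : Set.Ioc (max t 0) 1 ⊆ Set.Ioi t ∩ Set.Icc 0 1 := by
    intro x hx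
    exact ⟨lt_of_le_of_lt (le_max_left t 0) hx.1,
      le_of_lt (lt_of_le_of_lt (le_max_right t 0) hx.1), hx.2⟩
  have := measure_mono (μ := (volume : Measure ℝ)) hsub
  rw [h0, Real.volume_Ioc] at this
  simp only [nonpos_iff_eq_zero, ENNReal.ofReal_eq_zero] at this
  have : (0:ℝ) < 1 - max t 0 := by
    have : max t 0 < 1 := max_lt ht one_pos
    linarith
  linarith

omit [IsProbabilityMeasure (volume : Measure Ω)] in
lemma low_tail_pos {X : Ω → ℝ} (hX : Measurable X) (hmap : Measure.map X volume = unif 0 1)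
    {t : ℝ} (ht : 0 < t) : volume (X ⁻¹' Set.Iio t) ≠ 0 := by
  have h : volume (X ⁻¹' Set.Iio t) = Measure.map X volume (Set.Iio t) := by
    rw [Measure.map_apply hX measurableSet_Iio]
  rw [h, hmap, unif01, Measure.restrict_apply measurableSet_Iio]
  intro h0
  have hsub : Set.Ioo 0 (min t 1) ⊆ Set.Iio t ∩ Set.Icc 0 1 := by
    intro x hx
    exact ⟨lt_of_lt_of_le hx.2 (min_le_left t 1), le_of_lt hx.1,
      le_of_lt (lt_of_lt_of_le hx.2 (min_le_right t 1))⟩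
  have := measure_mono (μ := (volume : Measure ℝ)) hsub
  rw [h0, Real.volume_Ioo] at this
  simp only [nonpos_iff_eq_zero, ENNReal.ofReal_eq_zero] at this
  have : (0:ℝ) < min t 1 := lt_min ht one_pos
  linarith

omit [IsProbabilityMeasure (volume : Measure Ω)] in
lemma essSup_eq_one {X : Ω → ℝ} (hX01 : ∀ ω, X ω ∈ Set.Icc 0 1)
    (htail : ∀ t : ℝ, t < 1 → volume {ω | t < X ω} ≠ 0) : essSup X volume = 1 := by
  rw [essSup_eq_sInf]
  have hset : {a : ℝ | volume {ω | a < X ω} = 0} = Set.Ici 1 := by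
    ext t
    simp only [Set.mem_setOf_eq, Set.mem_Ici]
    constructor
    · intro h
      by_contra hlt
      exact htail t (lt_of_not_ge hlt) h
    · intro h
      have : {ω | t < X ω} = ∅ := by
        ext ω
        simp only [Set.mem_setOf_eq, Set.mem_empty_iff_false, iff_false, not_lt]
        exact le_trans (hX01 ω).2 h
      rw [this]; simp
  rw [hset, csInf_Ici]

omit [IsProbabilityMeasure (volume : Measure Ω)] in
lemma essInf_eq_zero {X : Ω → ℝ} (hX0 : ∀ ω, 0 ≤ X ω)
    (htail : ∀ t : ℝ, 0 < t → volume {ω | X ω < t} ≠ 0) : essInf X volume = 0 := by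
  rw [essInf_eq_sSup]
  have hset : {a : ℝ | volume {ω | X ω < a} = 0} = Set.Iic 0 := by
    ext t
    simp only [Set.mem_setOf_eq, Set.mem_Iic]
    constructor
    · intro h
      by_contra hlt
      exact htail t (lt_of_not_ge hlt) h
    · intro h
      have : {ω | X ω < t} = ∅ := by
        ext ω
        simp only [Set.mem_setOf_eq, Set.mem_empty_iff_false, iff_false, not_lt]
        exact le_trans h (hX0 ω)
      rw [this]; simp
  rw [hset, csSup_Iic]

omit [IsProbabilityMeasure (volume : Measure Ω)] in
lemma integral_unif01 {X : Ω → ℝ} (hX : Measurable X)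
    (hmap : Measure.map X volume = unif 0 1) : (∫ ω, X ω) = 1/2 := by
  have : (∫ ω, X ω) = ∫ x, x ∂(Measure.map X volume) :=
    (integral_map hX.aemeasurable aestronglyMeasurable_id).symm
  rw [this, hmap, unif01]
  rw [MeasureTheory.integral_Icc_eq_integral_Ioc, ← intervalIntegral.integral_of_le zero_le_one]
  simp

end Aux


/-- A functional of the form
`Φ(X̃) = a E(X̃) + b ess inf(X̃) + c ess sup(X̃)` with `a, b, c ≥ 0`, `a+b+c = 1`,
that is multiplicative on independent uniform random variables, must be the
expectation (`a = 1`), the essential infimum (`b = 1`), or the essential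
supremum (`c = 1`). -/
theorem stmt15 {Ω : Type*} [MeasureSpace Ω] [IsProbabilityMeasure (volume : Measure Ω)]
    (Φ : (Ω → ℝ) → ℝ) (a b c : ℝ)
    (ha : 0 ≤ a) (hb : 0 ≤ b) (hc : 0 ≤ c) (habc : a + b + c = 1)
    (hform : ∀ X : Ω → ℝ, Bdd X → Measurable X → (∀ ω, 0 ≤ X ω) →
      Φ X = a * (∫ ω, X ω) + b * essInf X volume + c * essSup X volume)
    (hexist : ∀ x₁ x₂ z₁ z₂ : ℝ, 0 ≤ x₁ → x₁ ≤ x₂ → 0 ≤ z₁ → z₁ ≤ z₂ →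
      ∃ X Z : Ω → ℝ, Measurable X ∧ Measurable Z ∧
        (∀ ω, X ω ∈ Set.Icc x₁ x₂) ∧ (∀ ω, Z ω ∈ Set.Icc z₁ z₂) ∧
        IndepFun X Z volume ∧
        Measure.map X volume = unif x₁ x₂ ∧ Measure.map Z volume = unif z₁ z₂)
    (hmult : ∀ (X Z : Ω → ℝ), Measurable X → Measurable Z → IndepFun X Z volume →
      (∃ x₁ x₂ : ℝ, 0 ≤ x₁ ∧ x₁ ≤ x₂ ∧ Measure.map X volume = unif x₁ x₂) →
      (∃ z₁ z₂ : ℝ, 0 ≤ z₁ ∧ z₁ ≤ z₂ ∧ Measure.map Z volume = unif z₁ z₂) →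
      Φ (fun ω => X ω * Z ω) = Φ X * Φ Z) :
    a = 1 ∨ b = 1 ∨ c = 1 := by
  obtain ⟨X, Z, hXm, hZm, hX01, hZ01, hind, hXmap, hZmap⟩ :=
    hexist 0 1 0 1 le_rfl zero_le_one le_rfl zero_le_one
  have hX0 : ∀ ω, 0 ≤ X ω := fun ω => (hX01 ω).1
  have hZ0 : ∀ ω, 0 ≤ Z ω := fun ω => (hZ01 ω).1
  have hX1 : ∀ ω, X ω ≤ 1 := fun ω => (hX01 ω).2
  have hZ1 : ∀ ω, Z ω ≤ 1 := fun ω => (hZ01 ω).2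
  -- Φ X and Φ Z
  have hbddX : Bdd X := ⟨1, fun ω => abs_le.2 ⟨by linarith [hX0 ω], hX1 ω⟩⟩
  have hbddZ : Bdd Z := ⟨1, fun ω => abs_le.2 ⟨by linarith [hZ0 ω], hZ1 ω⟩⟩
  have hXup : ∀ t : ℝ, t < 1 → volume {ω | t < X ω} ≠ 0 := fun t ht => tail_pos hXm hXmap ht
  have hZup : ∀ t : ℝ, t < 1 → volume {ω | t < Z ω} ≠ 0 := fun t ht => tail_pos hZm hZmap ht
  have hXlow : ∀ t : ℝ, 0 < t → volume {ω | X ω < t} ≠ 0 := fun t ht => low_tail_pos hXm hXmap ht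
  have hPhiX : Φ X = a / 2 + c := by
    rw [hform X hbddX hXm hX0, integral_unif01 hXm hXmap,
      essInf_eq_zero hX0 hXlow, essSup_eq_one hX01 hXup]
    ring
  have hPhiZ : Φ Z = a / 2 + c := by
    rw [hform Z hbddZ hZm hZ0, integral_unif01 hZm hZmap,
      essInf_eq_zero hZ0 (fun t ht => low_tail_pos hZm hZmap ht), essSup_eq_one hZ01 hZup]
    ring
  -- the product W
  set W : Ω → ℝ := fun ω => X ω * Z ω with hW
  have hWm : Measurable W := hXm.mul hZm
  have hW0 : ∀ ω, 0 ≤ W ω := fun ω => mul_nonneg (hX0 ω) (hZ0 ω)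
  have hW1 : ∀ ω, W ω ≤ 1 := fun ω => mul_le_one₀ (hX1 ω) (hZ0 ω) (hZ1 ω)
  have hbddW : Bdd W := ⟨1, fun ω => abs_le.2 ⟨by linarith [hW0 ω], hW1 ω⟩⟩
  have hWint : (∫ ω, W ω) = 1 / 4 := by
    have h := hind.integral_fun_mul_eq_mul_integral hXm.aestronglyMeasurable hZm.aestronglyMeasurable
    have h2 : (∫ ω, W ω) = (∫ ω, X ω) * ∫ ω, Z ω := h
    rw [h2, integral_unif01 hXm hXmap, integral_unif01 hZm hZmap]
    norm_num
  have hWinf : essInf W volume = 0 := by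
    refine essInf_eq_zero hW0 (fun t ht h0 => ?_)
    refine hXlow t ht (measure_mono_null ?_ h0)
    intro ω hω
    exact lt_of_le_of_lt (mul_le_of_le_one_right (hX0 ω) (hZ1 ω)) hω
  have hWsup : essSup W volume = 1 := by
    refine essSup_eq_one (fun ω => ⟨hW0 ω, hW1 ω⟩) (fun t ht h0 => ?_)
    by_cases ht0 : t < 0
    · have : {ω | t < W ω} = Set.univ := by
        ext ω; simp only [Set.mem_setOf_eq, Set.mem_univ, iff_true]
        exact lt_of_lt_of_le ht0 (hW0 ω)
      rw [this] at h0
      simp at h0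
    · push_neg at ht0
      set r : ℝ := (t + 1) / 2 with hr
      have hr1 : r < 1 := by rw [hr]; linarith
      have hr0 : 0 < r := by rw [hr]; linarith
      have hrt : t < r * r := by rw [hr]; nlinarith
      have hsub : X ⁻¹' Set.Ioi r ∩ Z ⁻¹' Set.Ioi r ⊆ {ω | t < W ω} := by
        intro ω hω
        have h1 : r < X ω := hω.1
        have h2 : r < Z ω := hω.2
        have : r * r < X ω * Z ω :=
          mul_lt_mul'' h1 h2 (le_of_lt hr0) (le_of_lt hr0)
        exact lt_trans hrt this
      have hzero := measure_mono_null hsub h0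
      rw [hind.measure_inter_preimage_eq_mul _ _ measurableSet_Ioi measurableSet_Ioi] at hzero
      rcases mul_eq_zero.1 hzero with h | h
      · exact tail_pos hXm hXmap hr1 h
      · exact tail_pos hZm hZmap hr1 h
  have hPhiW : Φ W = a / 4 + c := by
    rw [hform W hbddW hWm hW0, hWint, hWinf, hWsup]
    ring
  have hmain := hmult X Z hXm hZm hind ⟨0, 1, le_rfl, zero_le_one, hXmap⟩
    ⟨0, 1, le_rfl, zero_le_one, hZmap⟩
  rw [hPhiX, hPhiZ] at hmain
  have heq : a / 4 + c = (a / 2 + c) * (a / 2 + c) := by rw [← hPhiW, ← hmain]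
  -- algebra
  have hbc : b * c = a * (a - 1) / 4 := by nlinarith [heq, habc]
  have ha1 : a ≤ 1 := by linarith
  have hbc0 : b * c = 0 := le_antisymm (by nlinarith) (mul_nonneg hb hc)
  have haa : a * (a - 1) = 0 := by rw [hbc0] at hbc; linarith
  rcases mul_eq_zero.1 haa with h | h
  · rcases mul_eq_zero.1 hbc0 with hB | hC
    · right; right; linarith
    · right; left; linarith
  · left; linarith
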